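/- arXiv:2108.11000 — 2 statements merged into one kernel-verified Lean document; each statement's English description precedes it below -/
import Mathlib

section
/- For any two probability density functions g1 and g2 on a measure space, the expectation under g1 of the absolute value of log(g1/g2) is at most KL(g1, g2) + 2/e. -/
open MeasureTheory

lemma log_le_div_exp {x : ℝ} (hx : 0 < x) : Real.log x ≤ x / Real.exp 1 := by
  have h := Real.log_le_sub_one_of_pos (show 0 < x / Real.exp 1 by positivity)
  rw [Real.log_div (ne_of_gt hx) (Real.exp_ne_zero 1), Real.log_exp] at h
  linarith

lemma key_ptwise (a b : ℝ) (ha : 0 ≤ a) (hb : 0 ≤ b) :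
    a * |Real.log (a / b)| ≤ a * Real.log (a / b) + 2 * (b / Real.exp 1) := by
  rcases ha.eq_or_lt with rfl | ha'
  · simp
    positivity
  rcases hb.eq_or_lt with rfl | hb'
  · simp
  have hkey : a * max (Real.log (b / a)) 0 ≤ b / Real.exp 1 := by
    rcases le_or_gt (Real.log (b / a)) 0 with h | h
    · rw [max_eq_right h, mul_zero]
      positivity
    · rw [max_eq_left h.le]
      have := log_le_div_exp (show 0 < b / a by positivity)
      calc a * Real.log (b / a) ≤ a * ((b / a) / Real.exp 1) := by
            exact mul_le_mul_of_nonneg_left this ha'.le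
        _ = b / Real.exp 1 := by
            field_simp
  have hneg : Real.log (b / a) = -Real.log (a / b) := by
    rw [Real.log_div (ne_of_gt hb') (ne_of_gt ha'),
        Real.log_div (ne_of_gt ha') (ne_of_gt hb')]
    ring
  rcases le_or_gt 0 (Real.log (a / b)) with h | h
  · rw [abs_of_nonneg h]
    have : a * max (Real.log (b / a)) 0 = 0 := by
      rw [hneg, max_eq_right (by linarith), mul_zero]
    nlinarith [hkey]
  · rw [abs_of_neg h]
    have : a * max (Real.log (b / a)) 0 = a * (-Real.log (a / b)) := by
      rw [hneg, max_eq_left (by linarith)]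
    nlinarith [hkey]

/-- For any two probability density functions `g1` and `g2` on a measure space,
the expectation under `g1` of `|log (g1/g2)|` is at most `KL(g1,g2) + 2/e`. -/
theorem stmt0 {α : Type*} [MeasurableSpace α] (μ : Measure α)
    (g1 g2 : α → ℝ) (hg1 : ∀ x, 0 ≤ g1 x) (hg2 : ∀ x, 0 ≤ g2 x)
    (hm1 : Measurable g1) (hm2 : Measurable g2)
    (h1 : ∫ x, g1 x ∂μ = 1) (h2 : ∫ x, g2 x ∂μ = 1)
    (hint : Integrable (fun x => g1 x * |Real.log (g1 x / g2 x)|) μ)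
    (hintKL : Integrable (fun x => g1 x * Real.log (g1 x / g2 x)) μ) :
    ∫ x, g1 x * |Real.log (g1 x / g2 x)| ∂μ ≤
      (∫ x, g1 x * Real.log (g1 x / g2 x) ∂μ) + 2 / Real.exp 1 := by
  have hg2int : Integrable g2 μ := integrable_of_integral_eq_one h2
  have haux : Integrable (fun x => 2 * (g2 x / Real.exp 1)) μ :=
    ((hg2int.div_const _).const_mul 2)
  calc ∫ x, g1 x * |Real.log (g1 x / g2 x)| ∂μ
      ≤ ∫ x, (g1 x * Real.log (g1 x / g2 x) + 2 * (g2 x / Real.exp 1)) ∂μ := by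
        refine integral_mono hint (hintKL.add haux) fun x => ?_
        exact key_ptwise _ _ (hg1 x) (hg2 x)
    _ = (∫ x, g1 x * Real.log (g1 x / g2 x) ∂μ) + 2 / Real.exp 1 := by
        rw [integral_add hintKL haux]
        congr 1
        simp_rw [div_eq_mul_inv, ← mul_assoc, mul_comm (2:ℝ), mul_assoc]
        rw [integral_mul_const, h2]
        ring
end

section
/- Let ψ: ℝ → ℝ be a 1-Lipschitz activation function applied coordinatewise, and let η and η* be two feedforward networks of depth L+1 with the same architecture, with weight-and-bias matrices W̄_l and W̄*_l whose rows have L¹ norms bounded by B_l ≥ 1 in the l-th layer, and suppose each row of W̄_l − W̄*_l has L¹ norm at most ζ·B_l. Then for every input x ∈ [0,1]^p, |η(x) − η*(x)| ≤ ζ·(L+1)·∏_{j=0}^L B_j. -/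
open Finset

/-- Hidden-layer outputs of a feedforward network: `hid ψ k W v l x` is the
output of the `l`-th hidden layer (activation `ψ` applied coordinatewise). -/
noncomputable def hid (ψ : ℝ → ℝ) (k : ℕ → ℕ)
    (W : ∀ l : ℕ, Fin (k (l+1)) → Fin (k l) → ℝ)
    (v : ∀ l : ℕ, Fin (k (l+1)) → ℝ) :
    (l : ℕ) → (Fin (k 0) → ℝ) → Fin (k (l+1)) → ℝ
  | 0, x, i => ψ (∑ j, W 0 i j * x j + v 0 i)
  | (l+1), x, i => ψ (∑ j, W (l+1) i j * hid ψ k W v l x j + v (l+1) i)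

/-- Network output: linear output layer on top of `M+1` hidden layers
(depth `M+2`, i.e. the paper's `L = M+1`). -/
noncomputable def netOut (ψ : ℝ → ℝ) (k : ℕ → ℕ)
    (W : ∀ l : ℕ, Fin (k (l+1)) → Fin (k l) → ℝ)
    (v : ∀ l : ℕ, Fin (k (l+1)) → ℝ) (M : ℕ)
    (x : Fin (k 0) → ℝ) (i : Fin (k (M+2))) : ℝ :=
  ∑ j, W (M+1) i j * hid ψ k W v M x j + v (M+1) i

lemma affine_abs_le {n : ℕ} (a b : Fin n → ℝ) (c m : ℝ) (hm : 1 ≤ m)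
    (hb : ∀ j, |b j| ≤ m) :
    |∑ j, a j * b j + c| ≤ ((∑ j, |a j|) + |c|) * m := by
  have h1 : |∑ j, a j * b j + c| ≤ (∑ j, |a j| * |b j|) + |c| := by
    refine (abs_add_le _ _).trans ?_
    gcongr
    refine (Finset.abs_sum_le_sum_abs _ _).trans ?_
    exact le_of_eq (by simp [abs_mul])
  refine h1.trans ?_
  calc (∑ j, |a j| * |b j|) + |c|
      ≤ (∑ j, |a j| * m) + |c| * m :=
        add_le_add
          (Finset.sum_le_sum fun j _ =>
            mul_le_mul_of_nonneg_left (hb j) (abs_nonneg _))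
          (le_mul_of_one_le_right (abs_nonneg c) hm)
    _ = ((∑ j, |a j|) + |c|) * m := by rw [add_mul, Finset.sum_mul]

lemma sum_mul_abs_le {n : ℕ} (a d : Fin n → ℝ) (D : ℝ)
    (hd : ∀ j, |d j| ≤ D) :
    |∑ j, a j * d j| ≤ (∑ j, |a j|) * D := by
  refine (Finset.abs_sum_le_sum_abs _ _).trans ?_
  rw [Finset.sum_mul]
  refine Finset.sum_le_sum fun j _ => ?_
  rw [abs_mul]
  exact mul_le_mul_of_nonneg_left (hd j) (abs_nonneg _)

/-- If `ψ` is `1`-Lipschitz with `ψ(0)=0`, both networks have rows of the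
augmented weight matrices with `L¹` norm at most `B_l ≥ 1` in layer `l`, and
each row of the difference of augmented weight matrices has `L¹` norm at most
`ζ·B_l`, then for every input `x ∈ [0,1]^p`,
`|η(x) − η*(x)| ≤ ζ·(L+1)·∏_{j=0}^L B_j` (here `L = M+1`). -/
theorem stmt9 (M : ℕ) (k : ℕ → ℕ) (ψ : ℝ → ℝ)
    (hψ : ∀ a b : ℝ, |ψ a - ψ b| ≤ |a - b|) (hψ0 : ψ 0 = 0)
    (W W' : ∀ l : ℕ, Fin (k (l+1)) → Fin (k l) → ℝ)
    (v v' : ∀ l : ℕ, Fin (k (l+1)) → ℝ)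
    (B : ℕ → ℝ) (hB : ∀ l, 1 ≤ B l) (ζ : ℝ) (hζ : 0 ≤ ζ)
    (hrow : ∀ l ≤ M+1, ∀ i, (∑ j, |W l i j|) + |v l i| ≤ B l)
    (hrow' : ∀ l ≤ M+1, ∀ i, (∑ j, |W' l i j|) + |v' l i| ≤ B l)
    (hdiff : ∀ l ≤ M+1, ∀ i, (∑ j, |W l i j - W' l i j|) + |v l i - v' l i| ≤ ζ * B l)
    (x : Fin (k 0) → ℝ) (hx : ∀ j, x j ∈ Set.Icc (0:ℝ) 1) :
    ∀ i, |netOut ψ k W v M x i - netOut ψ k W' v' M x i|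
      ≤ ζ * (M + 2) * ∏ j ∈ Finset.range (M + 2), B j := by
  have hψa : ∀ a, |ψ a| ≤ |a| := fun a => by simpa [hψ0] using hψ a 0
  have hP1 : ∀ l, (1:ℝ) ≤ ∏ t ∈ Finset.range (l+1), B t :=
    fun l => by
      induction l with
      | zero => simpa using hB 0
      | succ l ih => rw [Finset.prod_range_succ]; nlinarith [hB (l+1)]
  have hP0 : ∀ l, (0:ℝ) ≤ ∏ t ∈ Finset.range (l+1), B t :=
    fun l => le_trans zero_le_one (hP1 l)
  have hxabs : ∀ t, |x t| ≤ 1 := fun t =>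
    abs_le.mpr ⟨by linarith [(hx t).1], (hx t).2⟩
  -- bound on hidden layer outputs
  have hbound : ∀ l, l ≤ M → ∀ j,
      |hid ψ k W v l x j| ≤ ∏ t ∈ Finset.range (l+1), B t := by
    intro l
    induction l with
    | zero =>
      intro _ j
      simp only [hid]
      refine (hψa _).trans ?_
      have h := affine_abs_le (W 0 j) x (v 0 j) 1 le_rfl hxabs
      rw [mul_one] at h
      simpa using h.trans (hrow 0 (by omega) j)
    | succ l ih =>
      intro hl j
      simp only [hid]
      refine (hψa _).trans ?_
      have h := affine_abs_le (W (l+1) j) (hid ψ k W v l x) (v (l+1) j) _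
        (hP1 l) (ih (by omega))
      refine h.trans ?_
      refine (mul_le_mul_of_nonneg_right (hrow (l+1) (by omega) j)
        (hP0 l)).trans (le_of_eq ?_)
      rw [Finset.prod_range_succ B (l+1), mul_comm]
  -- bound on differences of hidden layer outputs
  have hdiffb : ∀ l, l ≤ M → ∀ j,
      |hid ψ k W v l x j - hid ψ k W' v' l x j|
        ≤ ζ * (l + 1) * ∏ t ∈ Finset.range (l+1), B t := by
    intro l
    induction l with
    | zero =>
      intro _ j
      simp only [hid]
      refine (hψ _ _).trans ?_
      have heq : (∑ t, W 0 j t * x t + v 0 j) - (∑ t, W' 0 j t * x t + v' 0 j)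
          = ∑ t, (W 0 j t - W' 0 j t) * x t + (v 0 j - v' 0 j) := by
        simp only [sub_mul, Finset.sum_sub_distrib]
        ring
      rw [heq]
      have h := affine_abs_le (fun t => W 0 j t - W' 0 j t) x (v 0 j - v' 0 j)
        1 le_rfl hxabs
      rw [mul_one] at h
      simpa using h.trans (hdiff 0 (by omega) j)
    | succ l ih =>
      intro hl j
      simp only [hid]
      refine (hψ _ _).trans ?_
      set h := hid ψ k W v l x
      set h' := hid ψ k W' v' l x
      have heq : (∑ t, W (l+1) j t * h t + v (l+1) j)
            - (∑ t, W' (l+1) j t * h' t + v' (l+1) j)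
          = (∑ t, (W (l+1) j t - W' (l+1) j t) * h t + (v (l+1) j - v' (l+1) j))
            + ∑ t, W' (l+1) j t * (h t - h' t) := by
        simp only [sub_mul, mul_sub, Finset.sum_sub_distrib]
        ring
      rw [heq]
      set P := ∏ t ∈ Finset.range (l+1), B t
      have h1 : |∑ t, (W (l+1) j t - W' (l+1) j t) * h t + (v (l+1) j - v' (l+1) j)|
          ≤ ζ * B (l+1) * P := by
        have := affine_abs_le (fun t => W (l+1) j t - W' (l+1) j t) h
          (v (l+1) j - v' (l+1) j) P (hP1 l) (hbound l (by omega))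
        refine this.trans ?_
        exact mul_le_mul_of_nonneg_right (hdiff (l+1) (by omega) j) (hP0 l)
      have h2 : |∑ t, W' (l+1) j t * (h t - h' t)|
          ≤ B (l+1) * (ζ * (l + 1) * P) := by
        have := sum_mul_abs_le (W' (l+1) j) (fun t => h t - h' t)
          (ζ * (l + 1) * P) (ih (by omega))
        refine this.trans ?_
        have hW' : (∑ t, |W' (l+1) j t|) ≤ B (l+1) :=
          le_trans (le_add_of_nonneg_right (abs_nonneg _)) (hrow' (l+1) (by omega) j)
        have hD : 0 ≤ ζ * (l + 1) * P :=
          mul_nonneg (mul_nonneg hζ (by positivity)) (hP0 l)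
        exact mul_le_mul_of_nonneg_right hW' hD
      refine (abs_add_le _ _).trans ?_
      rw [Finset.prod_range_succ]
      calc _ ≤ ζ * B (l+1) * P + B (l+1) * (ζ * (l + 1) * P) := add_le_add h1 h2
        _ = ζ * (↑(l+1) + 1) * (P * B (l+1)) := by push_cast; ring
  -- output layer
  intro i
  unfold netOut
  set h := hid ψ k W v M x
  set h' := hid ψ k W' v' M x
  have heq : (∑ t, W (M+1) i t * h t + v (M+1) i)
        - (∑ t, W' (M+1) i t * h' t + v' (M+1) i)
      = (∑ t, (W (M+1) i t - W' (M+1) i t) * h t + (v (M+1) i - v' (M+1) i))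
        + ∑ t, W' (M+1) i t * (h t - h' t) := by
    simp only [sub_mul, mul_sub, Finset.sum_sub_distrib]
    ring
  rw [heq]
  set P := ∏ t ∈ Finset.range (M+1), B t
  have h1 : |∑ t, (W (M+1) i t - W' (M+1) i t) * h t + (v (M+1) i - v' (M+1) i)|
      ≤ ζ * B (M+1) * P := by
    have := affine_abs_le (fun t => W (M+1) i t - W' (M+1) i t) h
      (v (M+1) i - v' (M+1) i) P (hP1 M) (hbound M le_rfl)
    refine this.trans ?_
    exact mul_le_mul_of_nonneg_right (hdiff (M+1) le_rfl i) (hP0 M)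
  have h2 : |∑ t, W' (M+1) i t * (h t - h' t)|
      ≤ B (M+1) * (ζ * (M + 1) * P) := by
    have := sum_mul_abs_le (W' (M+1) i) (fun t => h t - h' t)
      (ζ * (M + 1) * P) (hdiffb M le_rfl)
    refine this.trans ?_
    have hW' : (∑ t, |W' (M+1) i t|) ≤ B (M+1) :=
      le_trans (le_add_of_nonneg_right (abs_nonneg _)) (hrow' (M+1) le_rfl i)
    have hD : 0 ≤ ζ * (M + 1) * P :=
      mul_nonneg (mul_nonneg hζ (by positivity)) (hP0 M)
    exact mul_le_mul_of_nonneg_right hW' hD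
  refine (abs_add_le _ _).trans ?_
  have : ∏ t ∈ Finset.range (M+2), B t = P * B (M+1) := Finset.prod_range_succ B (M+1)
  rw [this]
  calc _ ≤ ζ * B (M+1) * P + B (M+1) * (ζ * (M + 1) * P) := add_le_add h1 h2
    _ = ζ * (↑M + 2) * (P * B (M+1)) := by ring
end
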